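/- Fix a polynomial q ∈ O_F[X] with q(0) = 0 and non-zero image in K[X], and an integer R ∈ ℤ. The following are equivalent: (i) for all data a₁,a₂,n₁,n₂,h with depth R and normalised polynomial q and every Schwartz–Bruhat f on K×K, the function (x,y) ↦ g(x, y − h(x)) (g the lift of f at (a₁,a₂),(n₁,n₂)) is Fubini with repeated integral ∫_K∫_K f du dv · X^{n₁+n₂}; (ii) the same holds for all data of the form 0,0,0,0,h with depth R, normalised polynomial q and h(0) = 0; (iii) for every Schwartz–Bruhat f on K×K, the function (x,y) ↦ f⁰(x, y − t^R q(x)) is Fubini; (iv) for every Schwartz–Bruhat f on K×K: for each y ∈ F the function x ↦ f⁰(x, y − t^R q(x)) lies in L(F), the function y ↦ ∫^F f⁰(x, y − t^R q(x)) dx lies in L(F), and ∫^F∫^F f⁰(x, y − t^R q(x)) dx dy = ∫_K∫_K f(u,v) du dv. -/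

import Mathlib

noncomputable section

open MeasureTheory Polynomial
open scoped Classical

/-- The field `ℂ(X)` of complex rational functions. -/
abbrev CX : Type := RatFunc ℂ

/-- A complete discrete valuation field with residue field `K`:
`Fc` is the field, `O` its ring of integers, `t` a fixed prime element,
`res` the residue map and `ν` the discrete valuation.  The axioms say that `O` is a
valuation subring of `Fc`, `t` is irreducible in `O`, `res` is surjective with kernel
`tO`, every nonzero element is a unit times `t ^ ν`, and `O` is `t`-adically complete. -/
structure CDVF (K : Type) [Field K] : Type 1 where
  Fc : Type
  fieldF : Field Fc
  O : Subring Fc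
  t : Fc
  ht : t ∈ O
  res : O →+* K
  ν : Fc → ℤ
  hval : ∀ x : Fc, x ∈ O ∨ x⁻¹ ∈ O
  hirr : Irreducible (⟨t, ht⟩ : O)
  hres_surj : Function.Surjective res
  hres_ker : ∀ x : O, res x = 0 ↔ (⟨t, ht⟩ : O) ∣ x
  hν : ∀ x : Fc, x ≠ 0 → ∃ u : O, IsUnit u ∧ x = (u : Fc) * t ^ ν x
  hcomplete : ∀ s : ℕ → O, (∀ n : ℕ, (⟨t, ht⟩ : O) ^ n ∣ (s (n + 1) - s n)) →
    ∃ L : O, ∀ n : ℕ, (⟨t, ht⟩ : O) ^ n ∣ (L - s n)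

attribute [instance] CDVF.fieldF

namespace CDVF

variable {K : Type} [Field K] (E : CDVF K)

/-- The residue map, extended by zero outside the ring of integers. -/
def resF (x : E.Fc) : K := if h : x ∈ E.O then E.res ⟨x, h⟩ else 0

/-- The translated fractional ideal `a + t^c O`. -/
def tfi (a : E.Fc) (c : ℤ) : Set E.Fc := {y : E.Fc | ∃ z ∈ E.O, y = a + E.t ^ c * z}

/-- The lift `f⁰` of a function on the residue field. -/
def lift0 (f : K → ℂ) : E.Fc → CX := fun x =>
  if x ∈ E.O then algebraMap ℂ CX (f (E.resF x)) else 0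

/-- The lift `f^{a,n}` of `f` at `a, n`, determined by `f^{a,n}(a + t^n x) = f⁰(x)`. -/
def liftAt (f : K → ℂ) (a : E.Fc) (n : ℤ) : E.Fc → CX := fun z =>
  E.lift0 f (E.t ^ (-n) * (z - a))

/-- The two-dimensional lift `f⁰` of `f : K × K → ℂ`. -/
def lift0₂ (f : K × K → ℂ) : E.Fc → E.Fc → CX := fun x y =>
  if x ∈ E.O ∧ y ∈ E.O then algebraMap ℂ CX (f (E.resF x, E.resF y)) else 0

/-- The lift of `f : K × K → ℂ` at `(a₁,a₂),(n₁,n₂)`. -/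
def liftAt₂ (f : K × K → ℂ) (a₁ a₂ : E.Fc) (n₁ n₂ : ℤ) : E.Fc → E.Fc → CX := fun z w =>
  E.lift0₂ f (E.t ^ (-n₁) * (z - a₁)) (E.t ^ (-n₂) * (w - a₂))

/-- The space `L(F)` of integrable functions on `F`: the `ℂ(X)`-span of the lifts
`f^{a,n}` of Haar integrable functions `f` on the residue field. -/
def LF [MeasurableSpace K] (μ : Measure K) : Submodule CX (E.Fc → CX) :=
  Submodule.span CX
    {g : E.Fc → CX | ∃ f : K → ℂ, Integrable f μ ∧ ∃ (a : E.Fc) (n : ℤ), g = E.liftAt f a n}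

/-- `Φ(x,y) = f⁰(x, y − t^R q(x))`. -/
def Phi (f : K × K → ℂ) (R : ℤ) (q : Polynomial E.O) : E.Fc → E.Fc → CX := fun x y =>
  E.lift0₂ f x (y - E.t ^ R * Polynomial.eval x (q.map E.O.subtype))

/-- The non-singular part `Φ_ns` of `Φ`: the restriction of `Φ` to `W_ns × F`,
extended by zero, where `W_ns = {x ∈ O : q̄′(x̄) ≠ 0}`. -/
def PhiNS (f : K × K → ℂ) (R : ℤ) (q : Polynomial E.O) : E.Fc → E.Fc → CX := fun x y =>
  if x ∈ E.O ∧ Polynomial.eval (E.resF x) (Polynomial.derivative (q.map E.res)) ≠ 0 then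
    E.Phi f R q x y else 0

/-- The singular part `Φ_sing` of `Φ`: the restriction of `Φ` to `W_sing × F`,
extended by zero, where `W_sing = {x ∈ O : q̄′(x̄) = 0}`. -/
def PhiSing (f : K × K → ℂ) (R : ℤ) (q : Polynomial E.O) : E.Fc → E.Fc → CX := fun x y =>
  if x ∈ E.O ∧ Polynomial.eval (E.resF x) (Polynomial.derivative (q.map E.res)) = 0 then
    E.Phi f R q x y else 0

end CDVF

section Normed

variable {K : Type} [NontriviallyNormedField K]

/-- The absolute value `|α| = |res(α t^{−ν(α)})|_K ⬝ X^{ν(α)} ∈ ℂ(X)` of `α ∈ F^×`. -/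
def CDVF.absF (E : CDVF K) (α : E.Fc) : CX :=
  algebraMap ℂ CX ((‖E.resF (α * E.t ^ (-E.ν α))‖ : ℝ) : ℂ) * RatFunc.X ^ E.ν α

/-- Schwartz–Bruhat functions on `K × K` (for nonarchimedean `K`: the locally constant
functions of compact support). -/
def IsSB (f : K × K → ℂ) : Prop := IsLocallyConstant f ∧ HasCompactSupport f

variable [MeasurableSpace K] (μ : Measure K)

/-- A Haar integrable `f : K × K → ℂ` is Fubini: both repeated integrals exist and agree. -/
def KFubini (f : K × K → ℂ) : Prop :=
  Integrable f (μ.prod μ) ∧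
  (∀ u : K, Integrable (fun v => f (u, v)) μ) ∧
  (∀ v : K, Integrable (fun u => f (u, v)) μ) ∧
  Integrable (fun u => ∫ v, f (u, v) ∂μ) μ ∧
  Integrable (fun v => ∫ u, f (u, v) ∂μ) μ ∧
  (∫ u, ∫ v, f (u, v) ∂μ ∂μ) = ∫ v, ∫ u, f (u, v) ∂μ ∂μ

/-- `I` is the two-dimensional integral `∫^F` on `L(F)`: a `ℂ(X)`-linear functional which
lifts the Haar integral, is translation invariant, and is compatible with multiplicative
structure. -/
def CDVF.IsIntegralF (E : CDVF K) (I : (E.Fc → CX) →ₗ[CX] CX) : Prop :=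
  (∀ f : K → ℂ, Integrable f μ → I (E.lift0 f) = algebraMap ℂ CX (∫ u, f u ∂μ)) ∧
  (∀ g ∈ E.LF μ, ∀ a : E.Fc, I (fun x => g (x + a)) = I g) ∧
  (∀ g ∈ E.LF μ, ∀ α : E.Fc, α ≠ 0 → I (fun x => g (α * x)) = (E.absF α)⁻¹ * I g)

/-- A `ℂ(X)`-valued function on `F × F` is Fubini (with respect to the integral `I`):
all sections and repeated integrands are integrable and the two repeated integrals agree. -/
def CDVF.FFubini (E : CDVF K) (I : (E.Fc → CX) →ₗ[CX] CX) (g : E.Fc → E.Fc → CX) : Prop :=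
  (∀ x : E.Fc, (fun y => g x y) ∈ E.LF μ) ∧
  ((fun x => I (fun y => g x y)) ∈ E.LF μ) ∧
  (∀ y : E.Fc, (fun x => g x y) ∈ E.LF μ) ∧
  ((fun y => I (fun x => g x y)) ∈ E.LF μ) ∧
  I (fun x => I (fun y => g x y)) = I (fun y => I (fun x => g x y))

/-- The conclusion of the change-of-variables conjecture for the data
`a₁, a₂, n₁, n₂, h`: for every Schwartz–Bruhat `f` on `K × K`, with `g` the lift of `f` at
`(a₁,a₂),(n₁,n₂)`, the function `(x,y) ↦ g(x, y − h(x))` is Fubini on `F × F` with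
repeated integral `∫∫ f du dv ⬝ X^{n₁+n₂}`. -/
def CDVF.ConjHolds (E : CDVF K) (I : (E.Fc → CX) →ₗ[CX] CX)
    (a₁ a₂ : E.Fc) (n₁ n₂ : ℤ) (h : Polynomial E.Fc) : Prop :=
  ∀ f : K × K → ℂ, IsSB f →
    E.FFubini μ I (fun x y => E.liftAt₂ f a₁ a₂ n₁ n₂ x (y - Polynomial.eval x h)) ∧
    I (fun y => I (fun x => E.liftAt₂ f a₁ a₂ n₁ n₂ x (y - Polynomial.eval x h))) =
      algebraMap ℂ CX (∫ v, ∫ u, f (u, v) ∂μ ∂μ) * RatFunc.X ^ (n₁ + n₂)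

end Normed

section SBAux

variable {K : Type} [NontriviallyNormedField K] [MeasurableSpace K] [BorelSpace K]
    [LocallyCompactSpace K] (μ : Measure K) [Measure.IsAddHaarMeasure μ]

instance : ProperSpace K :=
  ProperSpace.of_nontriviallyNormedField_of_weaklyLocallyCompactSpace K

example : SecondCountableTopology K := inferInstance
example : SigmaFinite μ := inferInstance
example : IsFiniteMeasureOnCompacts (μ.prod μ) := inferInstance

lemma integrable_comp_mul_left_ne {f : K → ℂ} (hf : Integrable f μ) {c : K} (hc : c ≠ 0) :
    Integrable (fun x => f (c * x)) μ := by
  let e : K ≃ᵐ K := (Homeomorph.mulLeft₀ c hc).toMeasurableEquiv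
  let φ : K ≃+ K := { Equiv.mulLeft₀ c hc with map_add' := mul_add c }
  have hmap : (μ.map e).IsAddHaarMeasure := by
    have : (μ.map φ).IsAddHaarMeasure :=
      φ.isAddHaarMeasure_map μ (continuous_const.mul continuous_id)
        ((continuous_const.mul continuous_id : Continuous fun x : K => c⁻¹ * x))
    exact this
  haveI := hmap
  have heq : μ.map e = Measure.addHaarScalarFactor (μ.map e) μ • μ :=
    Measure.isAddLeftInvariant_eq_smul _ _
  have hint : Integrable f (μ.map e) := by
    rw [heq]
    have := hf.smul_measure (c := (Measure.addHaarScalarFactor (μ.map e) μ : ENNReal))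
      ENNReal.coe_ne_top
    simpa only [ENNReal.smul_def] using this
  have := (integrable_map_equiv e f).1 hint
  simpa [e, Function.comp_def] using this

variable {f : K × K → ℂ}

lemma sb_prod_integrable (hf : IsLocallyConstant f) (hs : HasCompactSupport f) :
    Integrable f (μ.prod μ) :=
  hf.continuous.integrable_of_hasCompactSupport hs

lemma sb_sect_left (hf : IsLocallyConstant f) (hs : HasCompactSupport f) (c : K) :
    Integrable (fun v => f (c, v)) μ := by
  have hcont : Continuous fun v => f (c, v) :=
    hf.continuous.comp (continuous_const.prodMk continuous_id)
  refine hcont.integrable_of_hasCompactSupport ?_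
  refine HasCompactSupport.intro (hs.image continuous_snd) fun v hv => ?_
  by_contra hne
  exact hv ⟨(c, v), subset_closure (Function.mem_support.2 hne), rfl⟩

lemma sb_sect_right (hf : IsLocallyConstant f) (hs : HasCompactSupport f) (c : K) :
    Integrable (fun u => f (u, c)) μ := by
  have hcont : Continuous fun u => f (u, c) :=
    hf.continuous.comp (continuous_id.prodMk continuous_const)
  refine hcont.integrable_of_hasCompactSupport ?_
  refine HasCompactSupport.intro (hs.image continuous_fst) fun u hu => ?_
  by_contra hne
  exact hu ⟨(u, c), subset_closure (Function.mem_support.2 hne), rfl⟩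

lemma sb_int_left (hf : IsLocallyConstant f) (hs : HasCompactSupport f) :
    Integrable (fun u => ∫ v, f (u, v) ∂μ) μ :=
  (sb_prod_integrable μ hf hs).integral_prod_left

lemma sb_swap (hf : IsLocallyConstant f) (hs : HasCompactSupport f) :
    (∫ u, ∫ v, f (u, v) ∂μ ∂μ) = ∫ v, ∫ u, f (u, v) ∂μ ∂μ :=
  integral_integral_swap
    ((sb_prod_integrable μ hf hs).congr (Filter.Eventually.of_forall fun _ => rfl))

end SBAux

section Statement10

variable {K : Type} [NontriviallyNormedField K] [MeasurableSpace K] [BorelSpace K]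
    [LocallyCompactSpace K] (μ : Measure K) [Measure.IsAddHaarMeasure μ]
    (E : CDVF K) (I : (E.Fc → CX) →ₗ[CX] CX)
    (R : ℤ) (q : Polynomial E.O)

/-- Condition (i): the conjecture is true for all data with depth `R` and normalised
polynomial `q`. -/
def Cond1 : Prop :=
  ∀ (a₁ a₂ : E.Fc) (n₁ n₂ : ℤ) (h : Polynomial E.Fc) (R' : ℤ),
    (∀ x : E.Fc, Polynomial.eval (a₁ + E.t ^ n₁ * x) h =
      Polynomial.eval a₁ h + E.t ^ R' * Polynomial.eval x (q.map E.O.subtype)) →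
    R' - n₂ = R → E.ConjHolds μ I a₁ a₂ n₁ n₂ h

/-- Condition (ii): the conjecture is true for all data of the form `0,0,0,0,h` with
depth `R`, normalised polynomial `q` and `h(0) = 0`. -/
def Cond2 : Prop :=
  ∀ h : Polynomial E.Fc, Polynomial.eval 0 h = 0 →
    (∀ x : E.Fc, Polynomial.eval ((0 : E.Fc) + E.t ^ (0 : ℤ) * x) h =
      Polynomial.eval (0 : E.Fc) h + E.t ^ R * Polynomial.eval x (q.map E.O.subtype)) →
    E.ConjHolds μ I 0 0 0 0 h

/-- Condition (iii): for all Schwartz–Bruhat `f`, the function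
`(x,y) ↦ f⁰(x, y − t^R q(x))` is Fubini. -/
def Cond3 : Prop := ∀ f : K × K → ℂ, IsSB f → E.FFubini μ I (E.Phi f R q)

/-- Condition (iv): for all Schwartz–Bruhat `f`, the `dx dy` repeated integral of
`(x,y) ↦ f⁰(x, y − t^R q(x))` is well defined and equals `∫_K ∫_K f(u,v) du dv`. -/
def Cond4 : Prop :=
  ∀ f : K × K → ℂ, IsSB f →
    (∀ y : E.Fc, (fun x => E.Phi f R q x y) ∈ E.LF μ) ∧
    ((fun y => I (fun x => E.Phi f R q x y)) ∈ E.LF μ) ∧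
    I (fun y => I (fun x => E.Phi f R q x y)) =
      algebraMap ℂ CX (∫ v, ∫ u, f (u, v) ∂μ ∂μ)


section Aux10

set_option linter.unusedSectionVars false


namespace CDVF

lemma t_ne' : E.t ≠ 0 := fun h => E.hirr.ne_zero (Subtype.ext h)

lemma res_unit_ne {u : E.O} (hu : IsUnit u) : E.res u ≠ 0 :=
  (hu.map E.res).ne_zero

lemma unit_t_zpow {u : E.O} (hu : IsUnit u) {k : ℤ} (h : (u : E.Fc) = E.t ^ k) : k = 0 := by
  by_contra hk
  have key : ∀ m : ℤ, 0 < m → ∀ w : E.O, IsUnit w → (w : E.Fc) = E.t ^ m → False := by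
    intro m hm w hw hwm
    have h1 : (w : E.Fc) = (((⟨E.t, E.ht⟩ : E.O) ^ m.toNat : E.O) : E.Fc) := by
      push_cast
      rw [hwm, ← zpow_natCast, Int.toNat_of_nonneg hm.le]
    have hw' : w = (⟨E.t, E.ht⟩ : E.O) ^ m.toNat := Subtype.ext (by simpa using h1)
    have : IsUnit (⟨E.t, E.ht⟩ : E.O) :=
      isUnit_of_dvd_unit (dvd_pow_self _ (by omega : m.toNat ≠ 0)) (hw' ▸ hw)
    exact E.hirr.not_isUnit this
  rcases lt_or_gt_of_ne hk with h1 | h1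
  · obtain ⟨v, rfl⟩ := hu
    have hv1 : ((↑(v⁻¹) : E.O) : E.Fc) * ((↑v : E.O) : E.Fc) = 1 := by
      have := congrArg (fun z : E.O => (z : E.Fc)) v.inv_mul
      push_cast at this
      simpa using this
    have hv2 : ((↑(v⁻¹) : E.O) : E.Fc) = E.t ^ (-k) := by
      rw [h] at hv1
      rw [zpow_neg]
      exact eq_inv_of_mul_eq_one_left hv1
    exact key (-k) (by omega) _ (Units.isUnit v⁻¹) hv2
  · exact key k h1 u hu h

lemma nu_t_zpow (n : ℤ) : E.ν (E.t ^ n) = n := by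
  obtain ⟨u, hu, h⟩ := E.hν _ (zpow_ne_zero n E.t_ne')
  have h2 : (u : E.Fc) = E.t ^ (n - E.ν (E.t ^ n)) := by
    rw [zpow_sub₀ E.t_ne']
    rw [eq_div_iff (zpow_ne_zero _ E.t_ne')]
    exact h.symm
  have := E.unit_t_zpow hu h2
  omega

lemma resF_one : E.resF 1 = 1 := by
  rw [CDVF.resF, dif_pos E.O.one_mem]
  exact map_one E.res

lemma absF_t_zpow (n : ℤ) : E.absF (E.t ^ n) = RatFunc.X ^ n := by
  rw [CDVF.absF, E.nu_t_zpow]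
  have h1 : E.t ^ n * E.t ^ (-n) = 1 := by
    rw [← zpow_add₀ E.t_ne']; simp
  rw [h1, E.resF_one]
  simp

lemma liftAt_zero_zero (f : K → ℂ) : E.liftAt f 0 0 = E.lift0 f := by
  funext z
  simp [CDVF.liftAt]

lemma liftAt_mem {f : K → ℂ} (hf : Integrable f μ) (a : E.Fc) (n : ℤ) :
    E.liftAt f a n ∈ E.LF μ :=
  Submodule.subset_span ⟨f, hf, a, n, rfl⟩

lemma lift0_mem {f : K → ℂ} (hf : Integrable f μ) : E.lift0 f ∈ E.LF μ :=
  E.liftAt_zero_zero f ▸ E.liftAt_mem μ hf 0 0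

lemma lift0_unit_mul {u : E.O} (hu : IsUnit u) (f : K → ℂ) (w : E.Fc) :
    E.lift0 f ((u : E.Fc) * w) = E.lift0 (fun v => f (E.res u * v)) w := by
  obtain ⟨v, rfl⟩ := hu
  have hv1 : ((↑(v⁻¹) : E.O) : E.Fc) * ((↑v : E.O) : E.Fc) = 1 := by
    have := congrArg (fun z : E.O => (z : E.Fc)) v.inv_mul
    push_cast at this
    simpa using this
  by_cases hw : w ∈ E.O
  · have h1 : ((↑v : E.O) : E.Fc) * w ∈ E.O := E.O.mul_mem (↑v : E.O).2 hw
    rw [CDVF.lift0, CDVF.lift0, if_pos h1, if_pos hw]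
    congr 1
    rw [CDVF.resF, CDVF.resF, dif_pos h1, dif_pos hw]
    have : (⟨((↑v : E.O) : E.Fc) * w, h1⟩ : E.O) = (↑v : E.O) * ⟨w, hw⟩ := rfl
    rw [this, map_mul]
  · have h1 : ((↑v : E.O) : E.Fc) * w ∉ E.O := by
      intro hmem
      apply hw
      have hw2 : w = ((↑(v⁻¹) : E.O) : E.Fc) * (((↑v : E.O) : E.Fc) * w) := by
        rw [← mul_assoc, hv1, one_mul]
      rw [hw2]
      exact E.O.mul_mem (↑(v⁻¹) : E.O).2 hmem
    rw [CDVF.lift0, CDVF.lift0, if_neg h1, if_neg hw]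

lemma LF_comp_affine {g : E.Fc → CX} (hg : g ∈ E.LF μ) {α : E.Fc} (hα : α ≠ 0) (β : E.Fc) :
    (fun x => g (α * x + β)) ∈ E.LF μ := by
  let T : (E.Fc → CX) →ₗ[CX] (E.Fc → CX) :=
    { toFun := fun g => fun x => g (α * x + β)
      map_add' := fun _ _ => rfl
      map_smul' := fun _ _ => rfl }
  have hle : E.LF μ ≤ (E.LF μ).comap T := by
    rw [CDVF.LF, Submodule.span_le]
    rintro g' ⟨f, hf, a, n, rfl⟩
    obtain ⟨u, hu, hα'⟩ := E.hν α hα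
    set m := E.ν α with hm
    refine Submodule.subset_span
      ⟨fun v => f (E.res u * v), integrable_comp_mul_left_ne μ hf (E.res_unit_ne hu),
        α⁻¹ * (a - β), n - m, ?_⟩
    funext x
    show E.liftAt f a n (α * x + β) = E.liftAt _ _ _ x
    rw [CDVF.liftAt, CDVF.liftAt, ← E.lift0_unit_mul hu]
    congr 1
    have h1 : α * x + β - a = α * (x - α⁻¹ * (a - β)) := by
      rw [mul_sub, ← mul_assoc, mul_inv_cancel₀ hα, one_mul]
      ring
    have h2 : E.t ^ (-(n - m)) = E.t ^ (-n) * E.t ^ m := by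
      rw [← zpow_add₀ E.t_ne']
      congr 1
      omega
    rw [h1, h2, hα']
    ring
  exact hle hg

lemma LF_comp_affine' {g : E.Fc → CX} (hg : g ∈ E.LF μ) {α : E.Fc} (hα : α ≠ 0) (a : E.Fc) :
    (fun x => g (α * (x - a))) ∈ E.LF μ := by
  have h : (fun x => g (α * (x - a))) = fun x => g (α * x + -(α * a)) := by
    funext x
    congr 1
    ring
  rw [h]
  exact E.LF_comp_affine μ hg hα _

lemma I_comp_affine (hI : E.IsIntegralF μ I) {g : E.Fc → CX} (hg : g ∈ E.LF μ)
    {α : E.Fc} (hα : α ≠ 0) (β : E.Fc) :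
    I (fun x => g (α * x + β)) = (E.absF α)⁻¹ * I g := by
  have hg1 : (fun x => g (x + β)) ∈ E.LF μ := by
    have := E.LF_comp_affine μ hg one_ne_zero β
    simpa using this
  have h2 := hI.2.2 _ hg1 α hα
  have h3 := hI.2.1 g hg β
  calc I (fun x => g (α * x + β)) = I (fun x => (fun y => g (y + β)) (α * x)) := rfl
    _ = (E.absF α)⁻¹ * I (fun y => g (y + β)) := h2
    _ = (E.absF α)⁻¹ * I g := by rw [h3]

lemma I_comp_affine' (hI : E.IsIntegralF μ I) {g : E.Fc → CX} (hg : g ∈ E.LF μ)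
    {α : E.Fc} (hα : α ≠ 0) (a : E.Fc) :
    I (fun x => g (α * (x - a))) = (E.absF α)⁻¹ * I g := by
  have h : (fun x => g (α * (x - a))) = fun x => g (α * x + -(α * a)) := by
    funext x; congr 1; ring
  rw [h]
  exact E.I_comp_affine μ I hI hg hα _

end CDVF

end Aux10


section CondAux

set_option linter.unusedSectionVars false
set_option synthInstance.maxHeartbeats 800000
set_option maxHeartbeats 1600000

variable {f : K × K → ℂ}

lemma phi_sect_eq (f : K × K → ℂ) {x : E.Fc} (hx : x ∈ E.O) :
    (fun y => E.Phi f R q x y) =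
      E.liftAt (fun v => f (E.resF x, v))
        (E.t ^ R * Polynomial.eval x (q.map E.O.subtype)) 0 := by
  funext y
  simp only [CDVF.Phi, CDVF.liftAt, CDVF.lift0₂, CDVF.lift0, neg_zero, zpow_zero, one_mul]
  by_cases h : y - E.t ^ R * Polynomial.eval x (q.map E.O.subtype) ∈ E.O
  · rw [if_pos ⟨hx, h⟩, if_pos h]
  · rw [if_neg (fun hc => h hc.2), if_neg h]

lemma phi_sect_zero (f : K × K → ℂ) {x : E.Fc} (hx : x ∉ E.O) :
    (fun y => E.Phi f R q x y) = 0 := by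
  funext y
  simp only [CDVF.Phi, CDVF.lift0₂]
  rw [if_neg (fun hc => hx hc.1)]
  rfl

lemma phi_sect_mem (hf1 : IsLocallyConstant f) (hf2 : HasCompactSupport f) (x : E.Fc) :
    (fun y => E.Phi f R q x y) ∈ E.LF μ := by
  by_cases hx : x ∈ E.O
  · rw [phi_sect_eq E R q f hx]
    exact E.liftAt_mem μ (sb_sect_left μ hf1 hf2 _) _ _
  · rw [phi_sect_zero E R q f hx]
    exact Submodule.zero_mem _

lemma I_phi_eq (hI : E.IsIntegralF μ I) (hf1 : IsLocallyConstant f)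
    (hf2 : HasCompactSupport f) :
    (fun x => I (fun y => E.Phi f R q x y)) = E.lift0 (fun u => ∫ v, f (u, v) ∂μ) := by
  funext x
  by_cases hx : x ∈ E.O
  · rw [phi_sect_eq E R q f hx]
    have hsec : Integrable (fun v => f (E.resF x, v)) μ := sb_sect_left μ hf1 hf2 _
    have h0 : E.liftAt (fun v => f (E.resF x, v))
          (E.t ^ R * Polynomial.eval x (q.map E.O.subtype)) 0
        = fun y => E.lift0 (fun v => f (E.resF x, v))
            (y + -(E.t ^ R * Polynomial.eval x (q.map E.O.subtype))) := by
      funext y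
      simp only [CDVF.liftAt, neg_zero, zpow_zero, one_mul, sub_eq_add_neg]
    rw [h0, hI.2.1 _ (E.lift0_mem μ hsec) _, hI.1 _ hsec]
    simp only [CDVF.lift0]
    rw [if_pos hx]
  · rw [phi_sect_zero E R q f hx]
    simp only [CDVF.lift0]
    rw [if_neg hx]
    exact map_zero I

lemma lift0_int_eq (hI : E.IsIntegralF μ I) (hf1 : IsLocallyConstant f)
    (hf2 : HasCompactSupport f) :
    I (E.lift0 (fun u => ∫ v, f (u, v) ∂μ)) =
      algebraMap ℂ CX (∫ v, ∫ u, f (u, v) ∂μ ∂μ) := by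
  rw [← sb_swap μ hf1 hf2]
  exact hI.1 _ (sb_int_left μ hf1 hf2)

lemma value_phi (hI : E.IsIntegralF μ I) (hf1 : IsLocallyConstant f)
    (hf2 : HasCompactSupport f) (hP : E.FFubini μ I (E.Phi f R q)) :
    I (fun y => I (fun x => E.Phi f R q x y)) =
      algebraMap ℂ CX (∫ v, ∫ u, f (u, v) ∂μ ∂μ) := by
  rw [← hP.2.2.2.2, I_phi_eq μ E I R q hI hf1 hf2]
  exact lift0_int_eq μ E I hI hf1 hf2

lemma cond3_to_cond4 (hI : E.IsIntegralF μ I) : Cond3 μ E I R q → Cond4 μ E I R q := by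
  intro h3 f hf
  have hP := h3 f hf
  exact ⟨hP.2.2.1, hP.2.2.2.1, value_phi μ E I R q hI hf.1 hf.2 hP⟩

lemma cond4_to_cond3 (hI : E.IsIntegralF μ I) : Cond4 μ E I R q → Cond3 μ E I R q := by
  intro h4 f hf
  obtain ⟨h1, h2, h3v⟩ := h4 f hf
  refine ⟨phi_sect_mem μ E R q hf.1 hf.2, ?_, h1, h2, ?_⟩
  · rw [I_phi_eq μ E I R q hI hf.1 hf.2]
    exact E.lift0_mem μ (sb_int_left μ hf.1 hf.2)
  · rw [h3v, I_phi_eq μ E I R q hI hf.1 hf.2]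
    exact lift0_int_eq μ E I hI hf.1 hf.2

lemma cond2_to_cond3 (hq0 : q.coeff 0 = 0) : Cond2 μ E I R q → Cond3 μ E I R q := by
  intro h2 f hf
  set h : Polynomial E.Fc := Polynomial.C (E.t ^ R) * (q.map E.O.subtype) with hdef
  have hxh : ∀ x : E.Fc, Polynomial.eval x h =
      E.t ^ R * Polynomial.eval x (q.map E.O.subtype) := by
    intro x
    rw [hdef, Polynomial.eval_mul, Polynomial.eval_C]
  have hh0 : Polynomial.eval 0 h = 0 := by
    rw [hxh, Polynomial.eval_zero_map, ← Polynomial.coeff_zero_eq_eval_zero, hq0]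
    simp
  have hhx : ∀ x : E.Fc, Polynomial.eval ((0 : E.Fc) + E.t ^ (0 : ℤ) * x) h =
      Polynomial.eval (0 : E.Fc) h + E.t ^ R * Polynomial.eval x (q.map E.O.subtype) := by
    intro x
    rw [hh0]
    rw [zpow_zero, one_mul, zero_add, zero_add, hxh]
  have hc := (h2 h hh0 hhx f hf).1
  have hfun : ∀ x y : E.Fc,
      E.liftAt₂ f 0 0 0 0 x (y - Polynomial.eval x h) = E.Phi f R q x y := by
    intro x y
    simp [CDVF.liftAt₂, CDVF.Phi, hxh x]
  simp only [hfun] at hc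
  exact hc

lemma cond3_to_cond2 (hI : E.IsIntegralF μ I) : Cond3 μ E I R q → Cond2 μ E I R q := by
  intro h3 h hh0 hhx f hf
  have hxh : ∀ x : E.Fc, Polynomial.eval x h =
      E.t ^ R * Polynomial.eval x (q.map E.O.subtype) := by
    intro x
    have := hhx x
    rw [hh0] at this
    simpa using this
  have hfun : ∀ x y : E.Fc,
      E.liftAt₂ f 0 0 0 0 x (y - Polynomial.eval x h) = E.Phi f R q x y := by
    intro x y
    simp [CDVF.liftAt₂, CDVF.Phi, hxh x]
  have hP := h3 f hf
  constructor
  · simp only [hfun]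
    exact hP
  · simp only [hfun]
    rw [value_phi μ E I R q hI hf.1 hf.2 hP]
    simp

lemma cond1_to_cond2 : Cond1 μ E I R q → Cond2 μ E I R q := by
  intro h1 h hh0 hhx
  exact h1 0 0 0 0 h R hhx (sub_zero R)

lemma cond3_to_cond1 (hI : E.IsIntegralF μ I) : Cond3 μ E I R q → Cond1 μ E I R q := by
  intro h3 a₁ a₂ n₁ n₂ h R' hh hR f hf
  have hP := h3 f hf
  have ht := E.t_ne'
  have hα₁ : E.t ^ (-n₁) ≠ 0 := zpow_ne_zero _ ht
  have hα₂ : E.t ^ (-n₂) ≠ 0 := zpow_ne_zero _ ht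
  have hpow2 : E.t ^ (-n₂) * E.t ^ R' = E.t ^ R := by
    rw [← zpow_add₀ ht]
    congr 1
    omega
  have hpow1 : E.t ^ (n₁ : ℤ) * E.t ^ (-n₁) = 1 := by
    rw [← zpow_add₀ ht]
    simp
  have key : ∀ x y : E.Fc, E.liftAt₂ f a₁ a₂ n₁ n₂ x (y - Polynomial.eval x h) =
      E.Phi f R q (E.t ^ (-n₁) * (x - a₁))
        (E.t ^ (-n₂) * (y - (a₂ + Polynomial.eval a₁ h))) := by
    intro x y
    simp only [CDVF.liftAt₂, CDVF.Phi]
    congr 1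
    have hxa : a₁ + E.t ^ n₁ * (E.t ^ (-n₁) * (x - a₁)) = x := by
      rw [← mul_assoc, hpow1, one_mul, add_sub_cancel]
    have hhx := hh (E.t ^ (-n₁) * (x - a₁))
    rw [hxa] at hhx
    rw [hhx, ← hpow2]
    ring
  have hF1 : Integrable (fun u => ∫ v, f (u, v) ∂μ) μ := sb_int_left μ hf.1 hf.2
  have hIphi := I_phi_eq μ E I R q hI hf.1 hf.2
  have hval := value_phi μ E I R q hI hf.1 hf.2 hP
  have hlift := lift0_int_eq μ E I hI hf.1 hf.2
  have hIy : ∀ u : E.Fc,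
      I (fun y => E.Phi f R q u (E.t ^ (-n₂) * (y - (a₂ + Polynomial.eval a₁ h))))
      = (E.absF (E.t ^ (-n₂)))⁻¹ * I (fun w => E.Phi f R q u w) :=
    fun u => E.I_comp_affine' μ I hI (hP.1 u) hα₂ _
  have hIx : ∀ w : E.Fc,
      I (fun x => E.Phi f R q (E.t ^ (-n₁) * (x - a₁)) w)
      = (E.absF (E.t ^ (-n₁)))⁻¹ * I (fun x' => E.Phi f R q x' w) :=
    fun w => E.I_comp_affine' μ I hI (hP.2.2.1 w) hα₁ _
  have heqB : (fun x => I (fun y => E.Phi f R q (E.t ^ (-n₁) * (x - a₁))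
        (E.t ^ (-n₂) * (y - (a₂ + Polynomial.eval a₁ h)))))
      = (E.absF (E.t ^ (-n₂)))⁻¹ •
        (fun x => E.lift0 (fun u => ∫ v, f (u, v) ∂μ) (E.t ^ (-n₁) * (x - a₁))) := by
    funext x
    rw [Pi.smul_apply, smul_eq_mul, hIy]
    congr 1
    exact congrFun hIphi _
  have heqA : (fun y => I (fun x => E.Phi f R q (E.t ^ (-n₁) * (x - a₁))
        (E.t ^ (-n₂) * (y - (a₂ + Polynomial.eval a₁ h)))))
      = (E.absF (E.t ^ (-n₁)))⁻¹ •
        (fun y => I (fun x' => E.Phi f R q x'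
          (E.t ^ (-n₂) * (y - (a₂ + Polynomial.eval a₁ h))))) := by
    funext y
    rw [Pi.smul_apply, smul_eq_mul, hIx]
  have hGmem : (fun w => I (fun x' => E.Phi f R q x' w)) ∈ E.LF μ := hP.2.2.2.1
  have hIA : I (fun y => I (fun x => E.Phi f R q (E.t ^ (-n₁) * (x - a₁))
        (E.t ^ (-n₂) * (y - (a₂ + Polynomial.eval a₁ h)))))
      = (E.absF (E.t ^ (-n₁)))⁻¹ * ((E.absF (E.t ^ (-n₂)))⁻¹ *
          algebraMap ℂ CX (∫ v, ∫ u, f (u, v) ∂μ ∂μ)) := by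
    rw [heqA, _root_.map_smul, smul_eq_mul,
      E.I_comp_affine' μ I hI hGmem hα₂ _, hval]
  have hIB : I (fun x => I (fun y => E.Phi f R q (E.t ^ (-n₁) * (x - a₁))
        (E.t ^ (-n₂) * (y - (a₂ + Polynomial.eval a₁ h)))))
      = (E.absF (E.t ^ (-n₂)))⁻¹ * ((E.absF (E.t ^ (-n₁)))⁻¹ *
          algebraMap ℂ CX (∫ v, ∫ u, f (u, v) ∂μ ∂μ)) := by
    rw [heqB, _root_.map_smul, smul_eq_mul,
      E.I_comp_affine' μ I hI (E.lift0_mem μ hF1) hα₁ _, hlift]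
  constructor
  · refine ⟨?_, ?_, ?_, ?_, ?_⟩
    · intro x
      simp only [key]
      exact E.LF_comp_affine' μ (hP.1 (E.t ^ (-n₁) * (x - a₁))) hα₂ _
    · simp only [key]
      rw [heqB]
      exact Submodule.smul_mem _ _ (E.LF_comp_affine' μ (E.lift0_mem μ hF1) hα₁ _)
    · intro y
      simp only [key]
      exact E.LF_comp_affine' μ
        (hP.2.2.1 (E.t ^ (-n₂) * (y - (a₂ + Polynomial.eval a₁ h)))) hα₁ _
    · simp only [key]
      rw [heqA]
      exact Submodule.smul_mem _ _ (E.LF_comp_affine' μ hGmem hα₂ _)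
    · simp only [key]
      rw [hIA, hIB]
      ring
  · simp only [key]
    rw [hIA, E.absF_t_zpow, E.absF_t_zpow]
    have hXz : ∀ n : ℤ, ((RatFunc.X : CX) ^ (-n))⁻¹ = RatFunc.X ^ n := fun n => by
      rw [zpow_neg, inv_inv]
    rw [hXz, hXz, zpow_add₀ (RatFunc.X_ne_zero : (RatFunc.X : CX) ≠ 0)]
    ring

end CondAux

/-- For a fixed normalised polynomial `q` (no constant term, non-zero
image in `K[X]`) and depth `R`, the four conditions above are equivalent. -/
theorem statement10 (hI : E.IsIntegralF μ I)
    (hq0 : q.coeff 0 = 0) (hqbar : q.map E.res ≠ 0) :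
    (Cond1 μ E I R q ↔ Cond2 μ E I R q) ∧
    (Cond2 μ E I R q ↔ Cond3 μ E I R q) ∧
    (Cond3 μ E I R q ↔ Cond4 μ E I R q) := by
  refine ⟨⟨cond1_to_cond2 μ E I R q,
      fun h2 => cond3_to_cond1 μ E I R q hI (cond2_to_cond3 μ E I R q hq0 h2)⟩,
    ⟨cond2_to_cond3 μ E I R q hq0, cond3_to_cond2 μ E I R q hI⟩,
    ⟨cond3_to_cond4 μ E I R q hI, cond4_to_cond3 μ E I R q hI⟩⟩

end Statement10
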